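/- For every MEC instance and every discretization constant φ > 1, let RDP^φ be the linear program obtained from RDP by replacing the capacity right-hand sides (1−α)·b_j and (1−α)·c_k with φ·b_j and φ·c_k, respectively. Then OPT_DTRP ≤ OPT_{RDP^φ}. (Hence the optimal value of RDP^φ is a valid upper bound on the optimal saved energy of DTRP.) -/

import Mathlib

open scoped BigOperators

/-- An MEC instance: finite sets of tasks `I`, access points `J` and servers `K`; task
parameters (size `s`, per-bit demand `eta`, deadline `dl`, local energy `El`, accessible
APs `acc`); channel gains `G`, noise power `sigma2`, resource units `bu, cu, pu`; integer
capacities `bcap, ccap ≥ 1`; backhaul delays `delay ≥ 0`; maximum offloading power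
`pmax ≥ 1`; and a resource allocation bound `0 ≤ alpha < 1` with `⌊alpha * bcap j⌋ ≥ 1` and
`⌊alpha * ccap k⌋ ≥ 1`. -/
structure MECInstance where
  I : Type
  J : Type
  K : Type
  [fI : Fintype I]
  [fJ : Fintype J]
  [fK : Fintype K]
  s : I → ℝ
  eta : I → ℝ
  dl : I → ℝ
  El : I → ℝ
  acc : I → J → Prop
  G : I → J → ℝ
  sigma2 : ℝ
  bu : ℝ
  cu : ℝ
  pu : ℝ
  bcap : J → ℤ
  ccap : K → ℤ
  delay : J → K → ℝ
  pmax : ℤ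
  alpha : ℝ
  hs : ∀ i, 0 < s i
  heta : ∀ i, 0 < eta i
  hdl : ∀ i, 0 < dl i
  hEl : ∀ i, 0 < El i
  hG : ∀ i j, 0 < G i j
  hsigma2 : 0 < sigma2
  hbu : 0 < bu
  hcu : 0 < cu
  hpu : 0 < pu
  hbcap : ∀ j, 1 ≤ bcap j
  hccap : ∀ k, 1 ≤ ccap k
  hdelay : ∀ j k, 0 ≤ delay j k
  hpmax : 1 ≤ pmax
  halpha0 : 0 ≤ alpha
  halpha1 : alpha < 1
  halphab : ∀ j, 1 ≤ ⌊alpha * (bcap j : ℝ)⌋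
  halphac : ∀ k, 1 ≤ ⌊alpha * (ccap k : ℝ)⌋

attribute [instance] MECInstance.fI MECInstance.fJ MECInstance.fK

namespace MECInstance

variable (P : MECInstance)

/-- Offloading time `t^o_{ij} = s_i / (b_{ij}·b̄·log₂(1 + p_{ij}·p̄·G_{ij}/σ²))`. -/
noncomputable def toff (i : P.I) (j : P.J) (b p : ℤ) : ℝ :=
  P.s i / ((b : ℝ) * P.bu * Real.logb 2 (1 + (p : ℝ) * P.pu * P.G i j / P.sigma2))

/-- Saved energy `E_{ij} = E^l_i − p_{ij}·p̄·t^o_{ij}`. -/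
noncomputable def Esaved (i : P.I) (j : P.J) (b p : ℤ) : ℝ :=
  P.El i - (p : ℝ) * P.pu * P.toff i j b p

/-- Feasibility of a DTRP solution `(x, y, b, c, p)`. -/
def DTRPFeasible (x : P.I → P.J → ℤ) (y : P.I → P.K → ℤ)
    (b : P.I → P.J → ℤ) (c : P.I → P.K → ℤ) (p : P.I → P.J → ℤ) : Prop :=
  (∀ i j, x i j = 0 ∨ x i j = 1) ∧
  (∀ i k, y i k = 0 ∨ y i k = 1) ∧
  (∀ i j, ¬ P.acc i j → x i j = 0) ∧
  (∀ i, ∑ j, x i j ≤ 1) ∧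
  (∀ i, ∑ k, y i k ≤ 1) ∧
  (∀ i j, 0 ≤ b i j) ∧ (∀ i k, 0 ≤ c i k) ∧ (∀ i j, 0 ≤ p i j) ∧
  (∀ j, ∑ i, b i j ≤ P.bcap j) ∧
  (∀ k, ∑ i, c i k ≤ P.ccap k) ∧
  (∀ i j, (b i j : ℝ) ≤ P.alpha * (P.bcap j : ℝ)) ∧
  (∀ i k, (c i k : ℝ) ≤ P.alpha * (P.ccap k : ℝ)) ∧
  (∀ i j, p i j ≤ P.pmax) ∧
  (∀ i j, x i j = 1 → 1 ≤ b i j) ∧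
  (∀ i j, x i j = 1 → 1 ≤ p i j) ∧
  (∀ i k, y i k = 1 → 1 ≤ c i k) ∧
  (∀ i, (∑ j, (x i j : ℝ) * P.toff i j (b i j) (p i j))
      + (∑ j, ∑ k, (x i j : ℝ) * (y i k : ℝ) * P.delay j k)
      + (∑ k, (y i k : ℝ) * (P.s i * P.eta i / ((c i k : ℝ) * P.cu))) ≤ P.dl i)

/-- DTRP objective: total saved energy `Σ_{i,j,k} x_{ij}·y_{ik}·E_{ij}`. -/
noncomputable def DTRPObj (x : P.I → P.J → ℤ) (y : P.I → P.K → ℤ)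
    (b : P.I → P.J → ℤ) (p : P.I → P.J → ℤ) : ℝ :=
  ∑ i, ∑ j, ∑ k, (x i j : ℝ) * (y i k : ℝ) * P.Esaved i j (b i j) (p i j)

/-- Optimal value of DTRP (supremum of objectives of feasible solutions). -/
noncomputable def optDTRP : ℝ :=
  sSup { v : ℝ | ∃ x y b c p, P.DTRPFeasible x y b c p ∧ v = P.DTRPObj x y b p }

/-- `π_j = ⌈log_φ(α·b_j)⌉` (a nonnegative integer). -/
noncomputable def piJ (φ : ℝ) (j : P.J) : ℕ :=
  (⌈Real.logb φ (P.alpha * (P.bcap j : ℝ))⌉).toNat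

/-- `λ_k = ⌈log_φ(α·c_k)⌉` (a nonnegative integer). -/
noncomputable def lamK (φ : ℝ) (k : P.K) : ℕ :=
  (⌈Real.logb φ (P.alpha * (P.ccap k : ℝ))⌉).toNat

/-- Discretized bandwidth levels: `B_m = ⌊φ^m⌋` for `m < π_j`, `B_{π_j} = ⌊α·b_j⌋`. -/
noncomputable def Blev (φ : ℝ) (j : P.J) (m : ℕ) : ℤ :=
  if m < P.piJ φ j then ⌊φ ^ m⌋ else ⌊P.alpha * (P.bcap j : ℝ)⌋

/-- Discretized computation levels: `C_n = ⌊φ^n⌋` for `n < λ_k`, `C_{λ_k} = ⌊α·c_k⌋`. -/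
noncomputable def Clev (φ : ℝ) (k : P.K) (n : ℕ) : ℤ :=
  if n < P.lamK φ k then ⌊φ ^ n⌋ else ⌊P.alpha * (P.ccap k : ℝ)⌋

/-- Allowed offloading time `T_{ijmkn} = d_i − δ_{jk} − s_i·η_i/(C_n·c̄)`. -/
noncomputable def Tcomb (φ : ℝ) (i : P.I) (j : P.J) (k : P.K) (n : ℕ) : ℝ :=
  P.dl i - P.delay j k - P.s i * P.eta i / ((P.Clev φ k n : ℝ) * P.cu)

/-- Required power `P_{ijmkn} = (σ²/(p̄·G_{ij}))·(2^{s_i/(T·B_m·b̄)} − 1)`. -/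
noncomputable def Pcomb (φ : ℝ) (i : P.I) (j : P.J) (m : ℕ) (k : P.K) (n : ℕ) : ℝ :=
  (P.sigma2 / (P.pu * P.G i j)) *
    ((2 : ℝ) ^ (P.s i / (P.Tcomb φ i j k n * (P.Blev φ j m : ℝ) * P.bu)) - 1)

/-- Saved energy `E_{ijmkn} = E^l_i − P_{ijmkn}·p̄·T_{ijmkn}` of a combination. -/
noncomputable def Ecomb (φ : ℝ) (i : P.I) (j : P.J) (m : ℕ) (k : P.K) (n : ℕ) : ℝ :=
  P.El i - P.Pcomb φ i j m k n * P.pu * P.Tcomb φ i j k n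

/-- Feasibility of a combination `⟨i,j,m,k,n⟩`. -/
noncomputable def FeasComb (φ : ℝ) (i : P.I) (j : P.J) (m : ℕ) (k : P.K) (n : ℕ) : Prop :=
  P.acc i j ∧ m ≤ P.piJ φ j ∧ n ≤ P.lamK φ k ∧
  0 < P.Tcomb φ i j k n ∧ P.Pcomb φ i j m k n ≤ (P.pmax : ℝ) ∧ 0 < P.Ecomb φ i j m k n

/-- RDP objective `Σ_{⟨i,j,m,k,n⟩} z_{ijmkn}·E_{ijmkn}`. -/
noncomputable def RDPObj (φ : ℝ) (z : P.I → P.J → ℕ → P.K → ℕ → ℝ) : ℝ :=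
  ∑ i, ∑ j, ∑ m ∈ Finset.range (P.piJ φ j + 1), ∑ k, ∑ n ∈ Finset.range (P.lamK φ k + 1),
    z i j m k n * P.Ecomb φ i j m k n

/-- Feasibility for the LP `RDP^φ`: as RDP, but with the capacity right-hand sides
`(1−α)·b_j` and `(1−α)·c_k` replaced by `φ·b_j` and `φ·c_k`. -/
noncomputable def RDPphiFeasible (φ : ℝ) (z : P.I → P.J → ℕ → P.K → ℕ → ℝ) : Prop :=
  (∀ i j m k n, 0 ≤ z i j m k n) ∧
  (∀ i j m k n, ¬ P.FeasComb φ i j m k n → z i j m k n = 0) ∧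
  (∀ i, ∑ j, ∑ m ∈ Finset.range (P.piJ φ j + 1), ∑ k, ∑ n ∈ Finset.range (P.lamK φ k + 1),
      z i j m k n ≤ 1) ∧
  (∀ j, ∑ i, ∑ m ∈ Finset.range (P.piJ φ j + 1), ∑ k, ∑ n ∈ Finset.range (P.lamK φ k + 1),
      z i j m k n * (P.Blev φ j m : ℝ) ≤ φ * (P.bcap j : ℝ)) ∧
  (∀ k, ∑ i, ∑ j, ∑ m ∈ Finset.range (P.piJ φ j + 1), ∑ n ∈ Finset.range (P.lamK φ k + 1),
      z i j m k n * (P.Clev φ k n : ℝ) ≤ φ * (P.ccap k : ℝ))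

/-- Optimal value of `RDP^φ`. -/
noncomputable def optRDPphi (φ : ℝ) : ℝ :=
  sSup { v : ℝ | ∃ z, P.RDPphiFeasible φ z ∧ v = P.RDPObj φ z }

end MECInstance

lemma bern_aux {a r : ℝ} (ha : 0 ≤ a) (hr0 : 0 ≤ r) (hr1 : r ≤ 1) :
    a ^ r ≤ 1 + r * (a - 1) := by
  have h := Real.geom_mean_le_arith_mean2_weighted hr0 (by linarith : (0:ℝ) ≤ 1 - r) ha
    zero_le_one (by ring)
  rw [Real.one_rpow, mul_one] at h
  linarith

lemma energy_antitone {c t1 t2 : ℝ} (hc : 0 < c) (h1 : 0 < t1) (h12 : t1 ≤ t2) :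
    t2 * ((2:ℝ) ^ (c / t2) - 1) ≤ t1 * ((2:ℝ) ^ (c / t1) - 1) := by
  have h2 : 0 < t2 := h1.trans_le h12
  set a := (2:ℝ) ^ (c / t1) with ha
  have ha0 : 0 ≤ a := (Real.rpow_pos_of_pos two_pos _).le
  have hr0 : 0 ≤ t1 / t2 := by positivity
  have hr1 : t1 / t2 ≤ 1 := by rw [div_le_one h2]; exact h12
  have key : (2:ℝ) ^ (c / t2) = a ^ (t1 / t2) := by
    rw [ha, ← Real.rpow_mul (by norm_num : (0:ℝ) ≤ 2)]
    congr 1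
    field_simp
  have hb := bern_aux ha0 hr0 hr1
  have ht2r : t2 * (t1 / t2 * (a - 1)) = t1 * (a - 1) := by
    field_simp
  have h3 : t2 * (a ^ (t1 / t2) - 1) ≤ t2 * (t1 / t2 * (a - 1)) :=
    mul_le_mul_of_nonneg_left (by linarith) h2.le
  rw [key]
  linarith

lemma onehot_sum {ι : Type} [Fintype ι] (x : ι → ℤ) (h01 : ∀ j, x j = 0 ∨ x j = 1)
    (hsum : ∑ j, x j ≤ 1) {j0 : ι} (hj0 : x j0 = 1) (f : ι → ℝ) :
    ∑ j, (x j : ℝ) * f j = f j0 := by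
  classical
  have hz : ∀ jj, jj ≠ j0 → x jj = 0 := by
    intro jj hne
    rcases h01 jj with h | h
    · exact h
    · exfalso
      have hsub : ({j0, jj} : Finset ι) ⊆ Finset.univ := Finset.subset_univ _
      have hpair : ∑ j ∈ ({j0, jj} : Finset ι), x j = 2 := by
        rw [Finset.sum_pair (Ne.symm hne)]; omega
      have h2 : (2:ℤ) ≤ ∑ j, x j := by
        rw [← hpair]
        exact Finset.sum_le_sum_of_subset_of_nonneg hsub
          (by intro t _ _; rcases h01 t with h' | h' <;> omega)
      omega
  rw [Finset.sum_eq_single j0]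
  · rw [hj0]; norm_num
  · intro jj _ hne; rw [hz jj hne]; norm_num
  · intro h; exact absurd (Finset.mem_univ j0) h

lemma geom_level_exists {φ : ℝ} (hφ : 1 < φ) {W : ℝ} (hW : 1 ≤ ⌊W⌋)
    {v : ℤ} (hv1 : 1 ≤ v) (hv2 : (v : ℝ) ≤ W) :
    ∃ m ≤ (⌈Real.logb φ W⌉).toNat,
      (v : ℝ) ≤ ((if m < (⌈Real.logb φ W⌉).toNat then ⌊φ ^ m⌋ else ⌊W⌋ : ℤ) : ℝ) ∧
      (((if m < (⌈Real.logb φ W⌉).toNat then ⌊φ ^ m⌋ else ⌊W⌋ : ℤ) : ℝ)) ≤ φ * v := by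
  classical
  set π := (⌈Real.logb φ W⌉).toNat with hπdef
  set lev : ℕ → ℤ := fun m => if m < π then ⌊φ ^ m⌋ else ⌊W⌋ with hlev
  have hφ0 : 0 < φ := by linarith
  have hW1 : (1:ℝ) ≤ W := le_trans (by exact_mod_cast hW) (Int.floor_le W)
  have hW0 : 0 < W := by linarith
  have hvW : v ≤ ⌊W⌋ := Int.le_floor.mpr hv2
  have hmem : v ≤ lev π := by simp only [hlev, lt_irrefl, if_false]; exact hvW
  have hex : ∃ m, v ≤ lev m := ⟨π, hmem⟩
  have hm : v ≤ lev (Nat.find hex) := Nat.find_spec hex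
  have hmπ : Nat.find hex ≤ π := Nat.find_le hmem
  have hv0 : (1:ℝ) ≤ (v:ℝ) := by exact_mod_cast hv1
  refine ⟨Nat.find hex, hmπ, by exact_mod_cast hm, ?_⟩
  show ((lev (Nat.find hex) : ℤ) : ℝ) ≤ φ * (v : ℝ)
  rcases Nat.eq_zero_or_pos (Nat.find hex) with h0 | hpos
  · rw [h0]
    by_cases hp : 0 < π
    · have hlev0 : lev 0 = 1 := by
        simp only [hlev, if_pos hp, pow_zero, Int.floor_one]
      rw [hlev0]; push_cast; nlinarith
    · have hπ0 : π = 0 := by omega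
      have hceil : ⌈Real.logb φ W⌉ ≤ 0 := by
        rw [hπdef] at hπ0; exact Int.toNat_eq_zero.mp hπ0
      have hlog : Real.logb φ W ≤ 0 := le_trans (Int.le_ceil _) (by exact_mod_cast hceil)
      have hWle : W ≤ 1 := (Real.logb_nonpos_iff hφ hW0).mp hlog
      have : lev 0 = ⌊W⌋ := by simp only [hlev, hπ0, lt_irrefl, if_false]
      rw [this]
      have : (⌊W⌋ : ℝ) ≤ 1 := le_trans (Int.floor_le W) hWle
      nlinarith
  · set m := Nat.find hex with hmdef
    obtain ⟨m', hm'⟩ : ∃ m', m = m' + 1 := ⟨m - 1, by omega⟩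
    have hmin : ¬ v ≤ lev m' := Nat.find_min hex (by omega)
    have hm'π : m' < π := by omega
    have hlevm' : lev m' = ⌊φ ^ m'⌋ := by simp only [hlev, if_pos hm'π]
    have hflt : φ ^ m' < (v : ℝ) := by
      have h1 : ⌊φ ^ m'⌋ + 1 ≤ v := by rw [hlevm'] at hmin; omega
      have h2 : φ ^ m' < (⌊φ ^ m'⌋ : ℝ) + 1 := Int.lt_floor_add_one _
      have h3 : ((⌊φ ^ m'⌋ : ℤ) : ℝ) + 1 ≤ (v : ℝ) := by exact_mod_cast h1
      linarith
    by_cases hmlt : m < π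
    · have : lev m = ⌊φ ^ m⌋ := by simp only [hlev, if_pos hmlt]
      rw [this]
      have h4 : (⌊φ ^ m⌋ : ℝ) ≤ φ ^ m := Int.floor_le _
      have h5 : φ ^ m = φ * φ ^ m' := by rw [hm']; ring
      nlinarith
    · have hmeq : m = π := by omega
      have hlevm : lev m = ⌊W⌋ := by simp only [hlev, if_neg hmlt]
      have hceilnn : 0 ≤ ⌈Real.logb φ W⌉ := by
        by_contra hc
        push_neg at hc
        have : π = 0 := by rw [hπdef]; exact Int.toNat_of_nonpos hc.le
        omega
      have hπc : (π : ℤ) = ⌈Real.logb φ W⌉ := by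
        rw [hπdef]; exact Int.toNat_of_nonneg hceilnn
      have hlogπ : Real.logb φ W ≤ (π : ℝ) := by
        have := Int.le_ceil (Real.logb φ W)
        calc Real.logb φ W ≤ (⌈Real.logb φ W⌉ : ℝ) := this
          _ = ((π : ℤ) : ℝ) := by rw [hπc]
          _ = (π : ℝ) := by push_cast; ring
      have hWle : W ≤ φ ^ (π : ℝ) := (Real.logb_le_iff_le_rpow hφ hW0).mp hlogπ
      have hWle' : W ≤ φ ^ π := by rwa [Real.rpow_natCast] at hWle
      have h6 : φ ^ π = φ * φ ^ m' := by rw [← hmeq, hm']; ring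
      have h7 : (⌊W⌋ : ℝ) ≤ W := Int.floor_le W
      rw [hlevm]
      nlinarith

namespace MECInstance

lemma one_le_Blev (P : MECInstance) {φ : ℝ} (hφ : 1 < φ) (j : P.J) (m : ℕ) :
    1 ≤ P.Blev φ j m := by
  unfold Blev
  split
  · exact Int.le_floor.mpr (by simpa using one_le_pow₀ hφ.le)
  · exact P.halphab j

lemma one_le_Clev (P : MECInstance) {φ : ℝ} (hφ : 1 < φ) (k : P.K) (n : ℕ) :
    1 ≤ P.Clev φ k n := by
  unfold Clev
  split
  · exact Int.le_floor.mpr (by simpa using one_le_pow₀ hφ.le)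
  · exact P.halphac k

lemma Blev_exists (P : MECInstance) {φ : ℝ} (hφ : 1 < φ) (j : P.J) {v : ℤ}
    (hv1 : 1 ≤ v) (hv2 : (v : ℝ) ≤ P.alpha * (P.bcap j : ℝ)) :
    ∃ m ≤ P.piJ φ j, (v : ℝ) ≤ (P.Blev φ j m : ℝ) ∧ (P.Blev φ j m : ℝ) ≤ φ * v := by
  exact
    geom_level_exists hφ (P.halphab j) hv1 hv2

lemma Clev_exists (P : MECInstance) {φ : ℝ} (hφ : 1 < φ) (k : P.K) {v : ℤ}
    (hv1 : 1 ≤ v) (hv2 : (v : ℝ) ≤ P.alpha * (P.ccap k : ℝ)) :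
    ∃ n ≤ P.lamK φ k, (v : ℝ) ≤ (P.Clev φ k n : ℝ) ∧ (P.Clev φ k n : ℝ) ≤ φ * v := by
  exact
    geom_level_exists hφ (P.halphac k) hv1 hv2

lemma core_bounds (P : MECInstance) (φ : ℝ) (hφ : 1 < φ)
    (i : P.I) (j : P.J) (k : P.K) (m n : ℕ) (b c p : ℤ)
    (hb1 : 1 ≤ b) (hc1 : 1 ≤ c) (hp1 : 1 ≤ p) (hppm : p ≤ P.pmax)
    (hB : (b : ℝ) ≤ (P.Blev φ j m : ℝ))
    (hC : (c : ℝ) ≤ (P.Clev φ k n : ℝ))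
    (hdead : P.toff i j b p + P.delay j k + P.s i * P.eta i / ((c : ℝ) * P.cu) ≤ P.dl i) :
    0 < P.Tcomb φ i j k n ∧ P.Pcomb φ i j m k n ≤ (P.pmax : ℝ) ∧
      P.Esaved i j b p ≤ P.Ecomb φ i j m k n := by
  have hs := P.hs i
  have heta := P.heta i
  have hbu := P.hbu
  have hcu := P.hcu
  have hpu := P.hpu
  have hG := P.hG i j
  have hsig := P.hsigma2
  have hbr : (1:ℝ) ≤ (b:ℝ) := by exact_mod_cast hb1
  have hcr : (1:ℝ) ≤ (c:ℝ) := by exact_mod_cast hc1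
  have hpr : (1:ℝ) ≤ (p:ℝ) := by exact_mod_cast hp1
  have hbpos : (0:ℝ) < (b:ℝ) := by linarith
  have hcpos' : (0:ℝ) < (c:ℝ) := by linarith
  have hppos : (0:ℝ) < (p:ℝ) := by linarith
  have hBpos : (0:ℝ) < (P.Blev φ j m : ℝ) := lt_of_lt_of_le (by linarith) hB
  have hCpos : (0:ℝ) < (P.Clev φ k n : ℝ) := lt_of_lt_of_le (by linarith) hC
  set L := Real.logb 2 (1 + (p:ℝ) * P.pu * P.G i j / P.sigma2) with hLdef
  have hargpos : 0 < (p:ℝ) * P.pu * P.G i j / P.sigma2 := by positivity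
  have harg : 1 < 1 + (p:ℝ) * P.pu * P.G i j / P.sigma2 := by linarith
  have hL : 0 < L := Real.logb_pos one_lt_two harg
  have htoff : P.toff i j b p = P.s i / ((b:ℝ) * P.bu * L) := by rw [hLdef]; rfl
  have hden : 0 < (b:ℝ) * P.bu * L := by positivity
  have htoffpos : 0 < P.toff i j b p := by rw [htoff]; positivity
  have h2L : (2:ℝ) ^ L = 1 + (p:ℝ) * P.pu * P.G i j / P.sigma2 :=
    Real.rpow_logb (by norm_num) (by norm_num) (by linarith)
  have hTc : P.toff i j b p ≤ P.Tcomb φ i j k n := by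
    have h1 : P.s i * P.eta i / ((P.Clev φ k n : ℝ) * P.cu)
        ≤ P.s i * P.eta i / ((c:ℝ) * P.cu) :=
      div_le_div_of_nonneg_left (by positivity) (mul_pos hcpos' hcu)
        (mul_le_mul_of_nonneg_right hC hcu.le)
    simp only [MECInstance.Tcomb]
    linarith
  have hTpos : 0 < P.Tcomb φ i j k n := lt_of_lt_of_le htoffpos hTc
  have hexp : P.s i / (P.toff i j b p * ((b:ℝ) * P.bu)) = L := by
    rw [htoff]
    field_simp
  have hexp' : P.s i / (P.toff i j b p * (b:ℝ) * P.bu) = L := by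
    rw [mul_assoc]; exact hexp
  have he : P.s i / (P.Tcomb φ i j k n * (P.Blev φ j m : ℝ) * P.bu) ≤ L := by
    rw [← hexp']
    refine div_le_div_of_nonneg_left hs.le ?_ ?_
    · exact mul_pos (mul_pos htoffpos hbpos) hbu
    · exact mul_le_mul (mul_le_mul hTc hB hbpos.le hTpos.le) le_rfl hbu.le
        (mul_nonneg hTpos.le hBpos.le)
  have hfrac : 0 < P.sigma2 / (P.pu * P.G i j) := by positivity
  have h2e : (2:ℝ) ^ (P.s i / (P.Tcomb φ i j k n * (P.Blev φ j m : ℝ) * P.bu)) ≤ (2:ℝ) ^ L :=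
    Real.rpow_le_rpow_of_exponent_le one_le_two he
  have heq : P.sigma2 / (P.pu * P.G i j) * ((2:ℝ) ^ L - 1) = (p:ℝ) := by
    rw [h2L, add_sub_cancel_left]
    field_simp
  have hPvalle : P.Pcomb φ i j m k n ≤ (p:ℝ) := by
    have h1 : P.Pcomb φ i j m k n ≤ P.sigma2 / (P.pu * P.G i j) * ((2:ℝ) ^ L - 1) := by
      unfold Pcomb
      exact mul_le_mul_of_nonneg_left (by linarith) hfrac.le
    rw [heq] at h1
    exact h1
  have hPmax : P.Pcomb φ i j m k n ≤ (P.pmax : ℝ) :=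
    le_trans hPvalle (by exact_mod_cast hppm)
  have hc2 : 0 < P.s i / ((b:ℝ) * P.bu) := by positivity
  have step1 : (2:ℝ) ^ (P.s i / (P.Tcomb φ i j k n * (P.Blev φ j m : ℝ) * P.bu))
      ≤ (2:ℝ) ^ ((P.s i / ((b:ℝ) * P.bu)) / P.Tcomb φ i j k n) := by
    apply Real.rpow_le_rpow_of_exponent_le one_le_two
    rw [div_div]
    refine div_le_div_of_nonneg_left hs.le ?_ ?_
    · exact mul_pos (mul_pos hbpos hbu) hTpos
    · nlinarith [mul_nonneg (mul_nonneg hTpos.le hbu.le) (sub_nonneg.mpr hB)]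
  have step2 := energy_antitone hc2 htoffpos hTc
  have ht0c : (P.s i / ((b:ℝ) * P.bu)) / P.toff i j b p = L := by
    have hcm : (b:ℝ) * P.bu * P.toff i j b p = P.toff i j b p * ((b:ℝ) * P.bu) := by ring
    rw [div_div, hcm, hexp]
  have hPT : P.Pcomb φ i j m k n * P.Tcomb φ i j k n ≤ (p:ℝ) * P.toff i j b p := by
    calc P.Pcomb φ i j m k n * P.Tcomb φ i j k n
        = P.sigma2 / (P.pu * P.G i j) * (P.Tcomb φ i j k n *
            ((2:ℝ) ^ (P.s i / (P.Tcomb φ i j k n * (P.Blev φ j m : ℝ) * P.bu)) - 1)) := by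
          unfold Pcomb; ring
      _ ≤ P.sigma2 / (P.pu * P.G i j) * (P.Tcomb φ i j k n *
            ((2:ℝ) ^ ((P.s i / ((b:ℝ) * P.bu)) / P.Tcomb φ i j k n) - 1)) := by
          apply mul_le_mul_of_nonneg_left _ hfrac.le
          apply mul_le_mul_of_nonneg_left _ hTpos.le
          linarith
      _ ≤ P.sigma2 / (P.pu * P.G i j) * (P.toff i j b p *
            ((2:ℝ) ^ ((P.s i / ((b:ℝ) * P.bu)) / P.toff i j b p) - 1)) :=
          mul_le_mul_of_nonneg_left step2 hfrac.le
      _ = (p:ℝ) * P.toff i j b p := by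
          rw [ht0c, h2L, add_sub_cancel_left]
          field_simp
  have hE : P.Esaved i j b p ≤ P.Ecomb φ i j m k n := by
    have h9 : P.Pcomb φ i j m k n * P.pu * P.Tcomb φ i j k n
        ≤ (p:ℝ) * P.pu * P.toff i j b p := by
      have h := mul_le_mul_of_nonneg_right hPT hpu.le
      calc P.Pcomb φ i j m k n * P.pu * P.Tcomb φ i j k n
          = P.Pcomb φ i j m k n * P.Tcomb φ i j k n * P.pu := by ring
        _ ≤ (p:ℝ) * P.toff i j b p * P.pu := h
        _ = (p:ℝ) * P.pu * P.toff i j b p := by ring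
    unfold Esaved Ecomb
    linarith
  exact ⟨hTpos, hPmax, hE⟩

end MECInstance


namespace MECInstance

lemma Ecomb_le_El (P : MECInstance) {φ : ℝ} (hφ : 1 < φ) (i : P.I) (j : P.J) (m : ℕ)
    (k : P.K) (n : ℕ) (hT : 0 < P.Tcomb φ i j k n) :
    P.Ecomb φ i j m k n ≤ P.El i := by
  have hB : (1:ℝ) ≤ (P.Blev φ j m : ℝ) := by exact_mod_cast P.one_le_Blev hφ j m
  have hbu := P.hbu
  have hPc : 0 ≤ P.Pcomb φ i j m k n := by
    unfold Pcomb
    have hden : 0 < P.Tcomb φ i j k n * (P.Blev φ j m : ℝ) * P.bu :=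
      mul_pos (mul_pos hT (lt_of_lt_of_le one_pos hB)) hbu
    have he : 0 < P.s i / (P.Tcomb φ i j k n * (P.Blev φ j m : ℝ) * P.bu) :=
      div_pos (P.hs i) hden
    have h1 : (2:ℝ) ^ (0:ℝ) ≤ (2:ℝ) ^ (P.s i / (P.Tcomb φ i j k n * (P.Blev φ j m : ℝ) * P.bu)) :=
      Real.rpow_le_rpow_of_exponent_le one_le_two he.le
    rw [Real.rpow_zero] at h1
    have hfr : 0 ≤ P.sigma2 / (P.pu * P.G i j) := by
      have := P.hsigma2; have := P.hpu; have := P.hG i j; positivity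
    nlinarith
  unfold Ecomb
  nlinarith [mul_nonneg (mul_nonneg hPc P.hpu.le) hT.le]

lemma exists_good_z (P : MECInstance) (φ : ℝ) (hφ : 1 < φ)
    (x : P.I → P.J → ℤ) (y : P.I → P.K → ℤ) (b : P.I → P.J → ℤ)
    (c : P.I → P.K → ℤ) (p : P.I → P.J → ℤ)
    (hf : P.DTRPFeasible x y b c p) :
    ∃ z, P.RDPphiFeasible φ z ∧ P.DTRPObj x y b p ≤ P.RDPObj φ z := by
  classical
  obtain ⟨hx01, hy01, hacc, hxsum, hysum, hbnn, hcnn, hpnn, hbcapc, hccapc,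
    hbal, hcal, hppmax, hxb, hxp, hyc, hdead⟩ := hf
  have hφ0 : (0:ℝ) < φ := by linarith
  -- level selection
  have hmSex : ∀ i j, ∃ m, m ≤ P.piJ φ j ∧ (x i j = 1 →
      ((b i j : ℝ) ≤ (P.Blev φ j m : ℝ) ∧ (P.Blev φ j m : ℝ) ≤ φ * (b i j : ℝ))) := by
    intro i j
    by_cases hx1 : x i j = 1
    · obtain ⟨m, hm1, hm2, hm3⟩ := P.Blev_exists hφ j (hxb i j hx1) (hbal i j)
      exact ⟨m, hm1, fun _ => ⟨hm2, hm3⟩⟩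
    · exact ⟨0, Nat.zero_le _, fun h => absurd h hx1⟩
  choose mS hmS1 hmS2 using hmSex
  have hnSex : ∀ i k, ∃ n, n ≤ P.lamK φ k ∧ (y i k = 1 →
      ((c i k : ℝ) ≤ (P.Clev φ k n : ℝ) ∧ (P.Clev φ k n : ℝ) ≤ φ * (c i k : ℝ))) := by
    intro i k
    by_cases hy1 : y i k = 1
    · obtain ⟨n, hn1, hn2, hn3⟩ := P.Clev_exists hφ k (hyc i k hy1) (hcal i k)
      exact ⟨n, hn1, fun _ => ⟨hn2, hn3⟩⟩
    · exact ⟨0, Nat.zero_le _, fun h => absurd h hy1⟩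
  choose nS hnS1 hnS2 using hnSex
  -- deadline reduction
  have hdl' : ∀ i j k, x i j = 1 → y i k = 1 →
      P.toff i j (b i j) (p i j) + P.delay j k
        + P.s i * P.eta i / ((c i k : ℝ) * P.cu) ≤ P.dl i := by
    intro i j k hx1 hy1
    have hd := hdead i
    have hmid : (∑ j', ∑ k', (x i j' : ℝ) * (y i k' : ℝ) * P.delay j' k')
        = ∑ j', (x i j' : ℝ) * (∑ k', (y i k' : ℝ) * P.delay j' k') := by
      refine Finset.sum_congr rfl fun j' _ => ?_
      rw [Finset.mul_sum]
      refine Finset.sum_congr rfl fun k' _ => by ring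
    rw [hmid, onehot_sum (x i) (hx01 i) (hxsum i) hx1,
      onehot_sum (x i) (hx01 i) (hxsum i) hx1,
      onehot_sum (y i) (hy01 i) (hysum i) hy1,
      onehot_sum (y i) (hy01 i) (hysum i) hy1] at hd
    exact hd
  -- core analytic facts
  have hcore : ∀ i j k, x i j = 1 → y i k = 1 →
      0 < P.Tcomb φ i j k (nS i k) ∧ P.Pcomb φ i j (mS i j) k (nS i k) ≤ (P.pmax : ℝ) ∧
      P.Esaved i j (b i j) (p i j) ≤ P.Ecomb φ i j (mS i j) k (nS i k) := by
    intro i j k hx1 hy1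
    exact P.core_bounds φ hφ i j k (mS i j) (nS i k) (b i j) (c i k) (p i j)
      (hxb i j hx1) (hyc i k hy1) (hxp i j hx1) (hppmax i j)
      ((hmS2 i j hx1).1) ((hnS2 i k hy1).1) (hdl' i j k hx1 hy1)
  set zInd : P.I → P.J → P.K → ℝ := fun i j k =>
    if x i j = 1 ∧ y i k = 1 ∧ 0 < P.Ecomb φ i j (mS i j) k (nS i k) then 1 else 0 with hzInd
  set z : P.I → P.J → ℕ → P.K → ℕ → ℝ :=
    fun i j m k n => if m = mS i j ∧ n = nS i k then zInd i j k else 0 with hzdef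
  have hzInd0 : ∀ i j k, 0 ≤ zInd i j k := by
    intro i j k
    simp only [hzInd]
    split_ifs <;> norm_num
  have hcollapse : ∀ i j k (w : ℕ → ℕ → ℝ),
      (∑ m ∈ Finset.range (P.piJ φ j + 1), ∑ n ∈ Finset.range (P.lamK φ k + 1),
        z i j m k n * w m n)
      = zInd i j k * w (mS i j) (nS i k) := by
    intro i j k w
    rw [Finset.sum_eq_single (mS i j)]
    · rw [Finset.sum_eq_single (nS i k)]
      · simp [hzdef]
      · intro n _ hn
        simp [hzdef, hn]
      · intro hmem
        exact absurd (Finset.mem_range.mpr (Nat.lt_succ_of_le (hnS1 i k))) hmem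
    · intro m _ hm
      apply Finset.sum_eq_zero
      intro n _
      simp [hzdef, hm]
    · intro hmem
      exact absurd (Finset.mem_range.mpr (Nat.lt_succ_of_le (hmS1 i j))) hmem
  have hxcast : ∀ i j, (0:ℝ) ≤ (x i j : ℝ) ∧ (x i j : ℝ) ≤ 1 := by
    intro i j; rcases hx01 i j with h | h <;> simp [h]
  have hycast : ∀ i k, (0:ℝ) ≤ (y i k : ℝ) ∧ (y i k : ℝ) ≤ 1 := by
    intro i k; rcases hy01 i k with h | h <;> simp [h]
  refine ⟨z, ⟨?_, ?_, ?_, ?_, ?_⟩, ?_⟩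
  · -- nonneg
    intro i j m k n
    simp only [hzdef]
    split_ifs with h
    · exact hzInd0 i j k
    · exact le_refl 0
  · -- vanishing on infeasible combinations
    intro i j m k n hnf
    simp only [hzdef]
    by_cases hmn : m = mS i j ∧ n = nS i k
    · rw [if_pos hmn]
      simp only [hzInd]
      rw [if_neg]
      rintro ⟨hx1, hy1, hE⟩
      apply hnf
      obtain ⟨hT, hP, _⟩ := hcore i j k hx1 hy1
      have haccij : P.acc i j := by
        by_contra hnacc
        rw [hacc i j hnacc] at hx1
        exact absurd hx1 (by norm_num)
      rw [hmn.1, hmn.2]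
      exact ⟨haccij, hmS1 i j, hnS1 i k, hT, hP, hE⟩
    · rw [if_neg hmn]
  · -- per-task constraint
    intro i
    have h1 : ∀ j, (∑ m ∈ Finset.range (P.piJ φ j + 1), ∑ k,
        ∑ n ∈ Finset.range (P.lamK φ k + 1), z i j m k n) = ∑ k, zInd i j k := by
      intro j
      rw [Finset.sum_comm]
      refine Finset.sum_congr rfl fun k _ => ?_
      simpa using hcollapse i j k (fun _ _ => 1)
    have hIndle : ∀ j k, zInd i j k ≤ (x i j : ℝ) * (y i k : ℝ) := by
      intro j k
      simp only [hzInd]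
      split_ifs with h
      · obtain ⟨h1', h2', _⟩ := h
        simp [h1', h2']
      · exact mul_nonneg (hxcast i j).1 (hycast i k).1
    have hxs1 : (∑ j, (x i j : ℝ)) ≤ 1 := by exact_mod_cast hxsum i
    have hys1 : (∑ k, (y i k : ℝ)) ≤ 1 := by exact_mod_cast hysum i
    have hxs0 : (0:ℝ) ≤ ∑ j, (x i j : ℝ) :=
      Finset.sum_nonneg fun j _ => (hxcast i j).1
    have hys0 : (0:ℝ) ≤ ∑ k, (y i k : ℝ) :=
      Finset.sum_nonneg fun k _ => (hycast i k).1
    calc (∑ j, ∑ m ∈ Finset.range (P.piJ φ j + 1), ∑ k,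
          ∑ n ∈ Finset.range (P.lamK φ k + 1), z i j m k n)
        = ∑ j, ∑ k, zInd i j k := Finset.sum_congr rfl fun j _ => h1 j
      _ ≤ ∑ j, ∑ k, (x i j : ℝ) * (y i k : ℝ) :=
          Finset.sum_le_sum fun j _ => Finset.sum_le_sum fun k _ => hIndle j k
      _ = (∑ j, (x i j : ℝ)) * (∑ k, (y i k : ℝ)) := by rw [Finset.sum_mul_sum]
      _ ≤ 1 := by nlinarith
  · -- bandwidth capacity
    intro j
    have h1 : ∀ i, (∑ m ∈ Finset.range (P.piJ φ j + 1), ∑ k,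
        ∑ n ∈ Finset.range (P.lamK φ k + 1), z i j m k n * (P.Blev φ j m : ℝ))
        = ∑ k, zInd i j k * (P.Blev φ j (mS i j) : ℝ) := by
      intro i
      rw [Finset.sum_comm]
      exact Finset.sum_congr rfl fun k _ => hcollapse i j k (fun m _ => (P.Blev φ j m : ℝ))
    have h2 : ∀ i, (∑ k, zInd i j k * (P.Blev φ j (mS i j) : ℝ)) ≤ φ * (b i j : ℝ) := by
      intro i
      have hb0 : (0:ℝ) ≤ (b i j : ℝ) := by exact_mod_cast hbnn i j
      have hterm : ∀ k, zInd i j k * (P.Blev φ j (mS i j) : ℝ)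
          ≤ (y i k : ℝ) * (φ * (b i j : ℝ)) := by
        intro k
        simp only [hzInd]
        split_ifs with h
        · obtain ⟨hx1, hy1, _⟩ := h
          rw [one_mul, hy1]
          push_cast
          rw [one_mul]
          exact (hmS2 i j hx1).2
        · rw [zero_mul]
          exact mul_nonneg (hycast i k).1 (mul_nonneg hφ0.le hb0)
      calc (∑ k, zInd i j k * (P.Blev φ j (mS i j) : ℝ))
          ≤ ∑ k, (y i k : ℝ) * (φ * (b i j : ℝ)) := Finset.sum_le_sum fun k _ => hterm k
        _ = (∑ k, (y i k : ℝ)) * (φ * (b i j : ℝ)) := by rw [Finset.sum_mul]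
        _ ≤ 1 * (φ * (b i j : ℝ)) := by
            apply mul_le_mul_of_nonneg_right _ (mul_nonneg hφ0.le hb0)
            exact_mod_cast hysum i
        _ = φ * (b i j : ℝ) := one_mul _
    calc (∑ i, ∑ m ∈ Finset.range (P.piJ φ j + 1), ∑ k,
          ∑ n ∈ Finset.range (P.lamK φ k + 1), z i j m k n * (P.Blev φ j m : ℝ))
        = ∑ i, ∑ k, zInd i j k * (P.Blev φ j (mS i j) : ℝ) :=
          Finset.sum_congr rfl fun i _ => h1 i
      _ ≤ ∑ i, φ * (b i j : ℝ) := Finset.sum_le_sum fun i _ => h2 i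
      _ = φ * ∑ i, (b i j : ℝ) := by rw [← Finset.mul_sum]
      _ ≤ φ * (P.bcap j : ℝ) := by
          apply mul_le_mul_of_nonneg_left _ hφ0.le
          exact_mod_cast hbcapc j
  · -- computation capacity
    intro k
    have h1 : ∀ i j, (∑ m ∈ Finset.range (P.piJ φ j + 1),
        ∑ n ∈ Finset.range (P.lamK φ k + 1), z i j m k n * (P.Clev φ k n : ℝ))
        = zInd i j k * (P.Clev φ k (nS i k) : ℝ) := by
      intro i j
      exact hcollapse i j k (fun _ n => (P.Clev φ k n : ℝ))
    have h2 : ∀ i, (∑ j, zInd i j k * (P.Clev φ k (nS i k) : ℝ)) ≤ φ * (c i k : ℝ) := by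
      intro i
      have hc0 : (0:ℝ) ≤ (c i k : ℝ) := by exact_mod_cast hcnn i k
      have hterm : ∀ j, zInd i j k * (P.Clev φ k (nS i k) : ℝ)
          ≤ (x i j : ℝ) * (φ * (c i k : ℝ)) := by
        intro j
        simp only [hzInd]
        split_ifs with h
        · obtain ⟨hx1, hy1, _⟩ := h
          rw [one_mul, hx1]
          push_cast
          rw [one_mul]
          exact (hnS2 i k hy1).2
        · rw [zero_mul]
          exact mul_nonneg (hxcast i j).1 (mul_nonneg hφ0.le hc0)
      calc (∑ j, zInd i j k * (P.Clev φ k (nS i k) : ℝ))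
          ≤ ∑ j, (x i j : ℝ) * (φ * (c i k : ℝ)) := Finset.sum_le_sum fun j _ => hterm j
        _ = (∑ j, (x i j : ℝ)) * (φ * (c i k : ℝ)) := by rw [Finset.sum_mul]
        _ ≤ 1 * (φ * (c i k : ℝ)) := by
            apply mul_le_mul_of_nonneg_right _ (mul_nonneg hφ0.le hc0)
            exact_mod_cast hxsum i
        _ = φ * (c i k : ℝ) := one_mul _
    calc (∑ i, ∑ j, ∑ m ∈ Finset.range (P.piJ φ j + 1),
          ∑ n ∈ Finset.range (P.lamK φ k + 1), z i j m k n * (P.Clev φ k n : ℝ))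
        = ∑ i, ∑ j, zInd i j k * (P.Clev φ k (nS i k) : ℝ) :=
          Finset.sum_congr rfl fun i _ => Finset.sum_congr rfl fun j _ => h1 i j
      _ ≤ ∑ i, φ * (c i k : ℝ) := Finset.sum_le_sum fun i _ => h2 i
      _ = φ * ∑ i, (c i k : ℝ) := by rw [← Finset.mul_sum]
      _ ≤ φ * (P.ccap k : ℝ) := by
          apply mul_le_mul_of_nonneg_left _ hφ0.le
          exact_mod_cast hccapc k
  · -- objective comparison
    have hobj : ∀ i j, (∑ m ∈ Finset.range (P.piJ φ j + 1), ∑ k,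
        ∑ n ∈ Finset.range (P.lamK φ k + 1), z i j m k n * P.Ecomb φ i j m k n)
        = ∑ k, zInd i j k * P.Ecomb φ i j (mS i j) k (nS i k) := by
      intro i j
      rw [Finset.sum_comm]
      exact Finset.sum_congr rfl fun k _ => hcollapse i j k (fun m n => P.Ecomb φ i j m k n)
    have hpt : ∀ i j k, (x i j : ℝ) * (y i k : ℝ) * P.Esaved i j (b i j) (p i j)
        ≤ zInd i j k * P.Ecomb φ i j (mS i j) k (nS i k) := by
      intro i j k
      by_cases hx1 : x i j = 1
      · by_cases hy1 : y i k = 1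
        · obtain ⟨_, _, hE⟩ := hcore i j k hx1 hy1
          simp only [hzInd, hx1, hy1, Int.cast_one, one_mul, true_and, and_true, eq_self_iff_true]
          split_ifs with hEp
          · rw [one_mul]
            exact hE
          · rw [zero_mul]
            push_neg at hEp
            linarith
        · have hy0 : y i k = 0 := (hy01 i k).resolve_right hy1
          simp [hzInd, hy0]
      · have hx0 : x i j = 0 := (hx01 i j).resolve_right hx1
        simp [hzInd, hx0]
    unfold DTRPObj RDPObj
    refine Finset.sum_le_sum fun i _ => Finset.sum_le_sum fun j _ => ?_
    rw [hobj i j]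
    exact Finset.sum_le_sum fun k _ => hpt i j k

end MECInstance

/-- For every MEC instance and every discretization constant `φ > 1`, the optimal value of
`RDP^φ` is a valid upper bound on the optimal saved energy of DTRP:
`OPT_DTRP ≤ OPT_{RDP^φ}`. -/
theorem rdp_phi_upper_bounds_dtrp (P : MECInstance) (φ : ℝ) (hφ : 1 < φ) :
    P.optDTRP ≤ P.optRDPphi φ := by
  classical
  have hφ0 : (0:ℝ) < φ := by linarith
  unfold MECInstance.optDTRP MECInstance.optRDPphi
  set S2 := { v : ℝ | ∃ z, P.RDPphiFeasible φ z ∧ v = P.RDPObj φ z } with hS2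
  have hbdd : BddAbove S2 := by
    refine ⟨∑ i, P.El i, ?_⟩
    rintro v ⟨z, ⟨hz0, hzf, hz1, _, _⟩, rfl⟩
    unfold MECInstance.RDPObj
    refine Finset.sum_le_sum fun i _ => ?_
    have hstep : (∑ j, ∑ m ∈ Finset.range (P.piJ φ j + 1), ∑ k,
        ∑ n ∈ Finset.range (P.lamK φ k + 1), z i j m k n * P.Ecomb φ i j m k n)
        ≤ ∑ j, ∑ m ∈ Finset.range (P.piJ φ j + 1), ∑ k,
        ∑ n ∈ Finset.range (P.lamK φ k + 1), z i j m k n * P.El i := by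
      refine Finset.sum_le_sum fun j _ => Finset.sum_le_sum fun m _ =>
        Finset.sum_le_sum fun k _ => Finset.sum_le_sum fun n _ => ?_
      by_cases hz : z i j m k n = 0
      · rw [hz, zero_mul, zero_mul]
      · have hfc : P.FeasComb φ i j m k n := by
          by_contra hnf
          exact hz (hzf i j m k n hnf)
        exact mul_le_mul_of_nonneg_left
          (P.Ecomb_le_El hφ i j m k n hfc.2.2.2.1) (hz0 i j m k n)
    refine le_trans hstep ?_
    have heq2 : (∑ j, ∑ m ∈ Finset.range (P.piJ φ j + 1), ∑ k,
        ∑ n ∈ Finset.range (P.lamK φ k + 1), z i j m k n * P.El i)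
        = (∑ j, ∑ m ∈ Finset.range (P.piJ φ j + 1), ∑ k,
        ∑ n ∈ Finset.range (P.lamK φ k + 1), z i j m k n) * P.El i := by
      simp_rw [Finset.sum_mul]
    rw [heq2]
    exact mul_le_of_le_one_left (P.hEl i).le (hz1 i)
  have h0mem : (0:ℝ) ∈ S2 := by
    refine ⟨fun _ _ _ _ _ => 0, ⟨?_, ?_, ?_, ?_, ?_⟩, ?_⟩
    · intro i j m k n; exact le_refl 0
    · intro i j m k n _; rfl
    · intro i; simp
    · intro j
      simp only [zero_mul, Finset.sum_const_zero]
      have : (1:ℝ) ≤ (P.bcap j : ℝ) := by exact_mod_cast P.hbcap j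
      nlinarith
    · intro k
      simp only [zero_mul, Finset.sum_const_zero]
      have : (1:ℝ) ≤ (P.ccap k : ℝ) := by exact_mod_cast P.hccap k
      nlinarith
    · simp [MECInstance.RDPObj]
  apply Real.sSup_le
  · rintro v ⟨x, y, b, c, p, hfeas, rfl⟩
    obtain ⟨z, hzfeas, hle⟩ := P.exists_good_z φ hφ x y b c p hfeas
    exact le_trans hle (le_csSup hbdd ⟨z, hzfeas, rfl⟩)
  · exact le_csSup hbdd h0mem
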